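/- Let α > 0, β > 0, and ξ ∈ ℝ with |ξ| > 1; set ε = 1 if ξ < -1 and ε = -1 if ξ > 1. For each n ≥ 1 the polynomial A_n has a smallest real zero μ_{1,n}, and μ_{1,n} → 0 as n → ∞. -/
import Mathlib

open Polynomial Filter

set_option maxHeartbeats 1000000

/-- The coefficient `B_n` of the Jacobi case (a). -/
noncomputable def BcoJ (α β ξ ε : ℝ) (n : ℕ) : ℝ :=
  ε / ((n : ℝ) * ((n : ℝ) + α + β - 1)) *
    (ξ - (β - α) * (α + β - 2) /
      ((2 * (n : ℝ) + α + β - 2) * (2 * (n : ℝ) + α + β)))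

/-- The coefficient `C_n` of the Jacobi case (a). -/
noncomputable def CcoJ (α β : ℝ) (n : ℕ) : ℝ :=
  4 * ((n : ℝ) + α - 1) * ((n : ℝ) + β - 1) /
    (((n : ℝ) - 1) * ((n : ℝ) + α + β - 1) * (2 * (n : ℝ) + α + β - 1) *
      (2 * (n : ℝ) + α + β - 2) ^ 2 * (2 * (n : ℝ) + α + β - 3))

/-- The polynomials `A_n(λ)` of the Jacobi case (a). -/
noncomputable def ApolyJ (α β ξ ε : ℝ) : ℕ → Polynomial ℝ
  | 0 => 1
  | 1 => Polynomial.X +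
      Polynomial.C (ε * ((1 + α + β) * (2 + α + β) * ξ ^ 2 +
          2 * (α - β) * (1 + α + β) * ξ + (α - β) ^ 2 - (2 + α + β)) /
        ((1 + α + β) * (2 + α + β) * (ξ * (α + β) - β + α)))
  | n + 2 =>
      (Polynomial.X + Polynomial.C (BcoJ α β ξ ε (n + 2))) * ApolyJ α β ξ ε (n + 1) -
        Polynomial.C (CcoJ α β (n + 2)) * ApolyJ α β ξ ε n

/-- auxiliary ratio bound sequence -/
noncomputable def tJx (a b : ℝ) (n : ℕ) : ℝ :=
  2*((n:ℝ)+a)/((n:ℝ)*(2*(n:ℝ)+a+b)*(2*(n:ℝ)+a+b-1))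

/-- auxiliary diagonal -/
noncomputable def ddJx (a b η : ℝ) (n : ℕ) : ℝ :=
  (η - (b-a)*(a+b-2)/((2*(n:ℝ)+a+b-2)*(2*(n:ℝ)+a+b)))/((n:ℝ)*((n:ℝ)+a+b-1))

/-- auxiliary first value -/
noncomputable def negc1J (a b η : ℝ) : ℝ :=
  ((1+(a+b))*(2+(a+b))*η^2 + 2*(a-b)*(1+(a+b))*η + (a-b)^2 - (2+(a+b))) /
    ((1+(a+b))*(2+(a+b))*(η*(a+b)+a-b))

private lemma chainR (m a b η : ℝ) (hm : 0 ≤ m) (ha : 0 < a) (hb : 0 < b) (hη : 1 ≤ η) :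
    4*((m+2)+a-1)*((m+2)+b-1) / (((m+2)-1)*((m+2)+a+b-1)*(2*(m+2)+a+b-1)*(2*(m+2)+a+b-2)^2*(2*(m+2)+a+b-3))
    ≤ (2*((m+1)+a)/((m+1)*(2*(m+1)+a+b)*(2*(m+1)+a+b-1))) *
      ((η - (b-a)*(a+b-2)/((2*(m+2)+a+b-2)*(2*(m+2)+a+b)))/((m+2)*((m+2)+a+b-1))
       - 2*((m+2)+a)/((m+2)*(2*(m+2)+a+b)*(2*(m+2)+a+b-1))) := by
  have h1 : (0:ℝ) < m+1 := by linarith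
  have h2 : (0:ℝ) < m+2 := by linarith
  have h3 : (0:ℝ) < 2*(m+1)+a+b := by linarith
  have h4 : (0:ℝ) < 2*(m+1)+a+b-1 := by linarith
  have h5 : (0:ℝ) < 2*(m+2)+a+b-2 := by linarith
  have h6 : (0:ℝ) < 2*(m+2)+a+b := by linarith
  have h7 : (0:ℝ) < 2*(m+2)+a+b-1 := by linarith
  have h8 : (0:ℝ) < 2*(m+2)+a+b-3 := by linarith
  have h9 : (0:ℝ) < (m+2)+a+b-1 := by linarith
  have h10 : (0:ℝ) < (m+2)-1 := by linarith
  have h11 : (0:ℝ) < m+a+b+1 := by linarith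
  have h12 : (0:ℝ) < 2*m+a+b+1 := by linarith
  have h13 : (0:ℝ) < 2*m+a+b+2 := by linarith
  have h14 : (0:ℝ) < 2*m+a+b+3 := by linarith
  have h15 : (0:ℝ) < 2*m+a+b+4 := by linarith
  have hDpos : (0:ℝ) < (m+1)*(m+2)*(m+a+b+1)*(2*m+a+b+1)*(2*m+a+b+2)^2*(2*m+a+b+3)*(2*m+a+b+4) := by positivity
  have hsplit : (2*((m+1)+a)/((m+1)*(2*(m+1)+a+b)*(2*(m+1)+a+b-1))) *
      ((η - (b-a)*(a+b-2)/((2*(m+2)+a+b-2)*(2*(m+2)+a+b)))/((m+2)*((m+2)+a+b-1))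
       - 2*((m+2)+a)/((m+2)*(2*(m+2)+a+b)*(2*(m+2)+a+b-1)))
      = (2*((m+1)+a)/((m+1)*(2*(m+1)+a+b)*(2*(m+1)+a+b-1))) *
        ((η - (b-a)*(a+b-2)/((2*(m+2)+a+b-2)*(2*(m+2)+a+b)))/((m+2)*((m+2)+a+b-1)))
        - (2*((m+1)+a)/((m+1)*(2*(m+1)+a+b)*(2*(m+1)+a+b-1))) *
          (2*((m+2)+a)/((m+2)*(2*(m+2)+a+b)*(2*(m+2)+a+b-1))) := mul_sub _ _ _
  have f1 : (2*((m+1)+a)/((m+1)*(2*(m+1)+a+b)*(2*(m+1)+a+b-1))) *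
        ((η - (b-a)*(a+b-2)/((2*(m+2)+a+b-2)*(2*(m+2)+a+b)))/((m+2)*((m+2)+a+b-1)))
      = (2*(m+1+a)*(η*((2*m+a+b+2)*(2*m+a+b+4)) - (b-a)*(a+b-2))*(2*m+a+b+3)) /
        ((m+1)*(m+2)*(m+a+b+1)*(2*m+a+b+1)*(2*m+a+b+2)^2*(2*m+a+b+3)*(2*m+a+b+4)) := by
    field_simp
    ring
  have f2 : (2*((m+1)+a)/((m+1)*(2*(m+1)+a+b)*(2*(m+1)+a+b-1))) *
        (2*((m+2)+a)/((m+2)*(2*(m+2)+a+b)*(2*(m+2)+a+b-1)))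
      = (4*(m+1+a)*(m+2+a)*(m+a+b+1)*(2*m+a+b+2)) /
        ((m+1)*(m+2)*(m+a+b+1)*(2*m+a+b+1)*(2*m+a+b+2)^2*(2*m+a+b+3)*(2*m+a+b+4)) := by
    field_simp
    ring
  have f3 : 4*((m+2)+a-1)*((m+2)+b-1) / (((m+2)-1)*((m+2)+a+b-1)*(2*(m+2)+a+b-1)*(2*(m+2)+a+b-2)^2*(2*(m+2)+a+b-3))
      = (4*(m+1+a)*(m+1+b)*(m+2)*(2*m+a+b+4)) /
        ((m+1)*(m+2)*(m+a+b+1)*(2*m+a+b+1)*(2*m+a+b+2)^2*(2*m+a+b+3)*(2*m+a+b+4)) := by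
    field_simp
    ring
  rw [hsplit, f1, f2, f3, div_sub_div_same]
  refine (div_le_div_iff_of_pos_right hDpos).mpr ?_
  have hid : (2*(m+1+a)*(η*((2*m+a+b+2)*(2*m+a+b+4)) - (b-a)*(a+b-2))*(2*m+a+b+3))
      - (4*(m+1+a)*(m+2+a)*(m+a+b+1)*(2*m+a+b+2))
      - (4*(m+1+a)*(m+1+b)*(m+2)*(2*m+a+b+4))
      = 2*(η-1)*(m+1+a)*(2*m+a+b+2)*(2*m+a+b+3)*(2*m+a+b+4) := by ring
  have hfact : (0:ℝ) ≤ 2*(η-1)*(m+1+a)*(2*m+a+b+2)*(2*m+a+b+3)*(2*m+a+b+4) :=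
    mul_nonneg (mul_nonneg (mul_nonneg (mul_nonneg (by linarith) (by linarith)) h13.le) h14.le) h15.le
  linarith [hid, hfact]

private lemma chainJ (a b η : ℝ) (ha : 0 < a) (hb : 0 < b) (hη : 1 ≤ η) (n : ℕ) :
    CcoJ a b (n+2) ≤ tJx a b (n+1) * (ddJx a b η (n+2) - tJx a b (n+2)) := by
  unfold CcoJ tJx ddJx
  push_cast
  exact chainR (n:ℝ) a b η (Nat.cast_nonneg n) ha hb hη

private lemma baseJ (a b η : ℝ) (ha : 0 < a) (hb : 0 < b) (hη : 1 ≤ η) :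
    tJx a b 1 ≤ negc1J a b η := by
  have h0 : (0:ℝ) < a+b := by linarith
  have h1 : (0:ℝ) < 1+(a+b) := by linarith
  have h2 : (0:ℝ) < 2+(a+b) := by linarith
  have h3 : (0:ℝ) < η*(a+b)+a-b := by nlinarith
  unfold negc1J tJx
  push_cast
  rw [div_le_div_iff₀ (by nlinarith) (by positivity)]
  have hid : ((1+(a+b))*(2+(a+b))*η^2 + 2*(a-b)*(1+(a+b))*η + (a-b)^2 - (2+(a+b)))
        * (1*(2*1+a+b)*(2*1+a+b-1))
      - 2*(1+a) * ((1+(a+b))*(2+(a+b))*(η*(a+b)+a-b))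
      = (η-1)*((η-1)*(a+b+1)+2*(a+1))*(1+(a+b))*(2+(a+b))^2 := by ring
  have hfact : (0:ℝ) ≤ (η-1)*((η-1)*(a+b+1)+2*(a+1))*(1+(a+b))*(2+(a+b))^2 := by
    have h4 : (0:ℝ) ≤ η - 1 := by linarith
    have h5 : (0:ℝ) ≤ (η-1)*(a+b+1)+2*(a+1) := by nlinarith
    positivity
  linarith [hid, hfact]

private lemma tJx_pos (a b : ℝ) (ha : 0 < a) (hb : 0 < b) (n : ℕ) : 0 < tJx a b (n+1) := by
  unfold tJx
  push_cast
  have h1 : (0:ℝ) < (n:ℝ)+1 := by positivity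
  have h2 : (0:ℝ) < 2*((n:ℝ)+1)+a+b := by positivity
  have h3 : (0:ℝ) < 2*((n:ℝ)+1)+a+b-1 := by
    have : (0:ℝ) ≤ (n:ℝ) := n.cast_nonneg
    linarith
  have h4 : (0:ℝ) < 2*((n:ℝ)+1)+a := by positivity
  positivity

private lemma CcoJ_pos (a b : ℝ) (ha : 0 < a) (hb : 0 < b) (n : ℕ) : 0 < CcoJ a b (n+2) := by
  unfold CcoJ
  push_cast
  have h0 : (0:ℝ) ≤ (n:ℝ) := n.cast_nonneg
  have h1 : (0:ℝ) < (n:ℝ)+2+a-1 := by linarith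
  have h2 : (0:ℝ) < (n:ℝ)+2+b-1 := by linarith
  have h3 : (0:ℝ) < (n:ℝ)+2-1 := by linarith
  have h4 : (0:ℝ) < (n:ℝ)+2+a+b-1 := by linarith
  have h5 : (0:ℝ) < 2*((n:ℝ)+2)+a+b-1 := by linarith
  have h6 : (0:ℝ) < 2*((n:ℝ)+2)+a+b-2 := by linarith
  have h7 : (0:ℝ) < 2*((n:ℝ)+2)+a+b-3 := by linarith
  positivity

private lemma ddJx_pos (a b η : ℝ) (ha : 0 < a) (hb : 0 < b) (hη : 1 < η) (n : ℕ) :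
    0 < ddJx a b η (n+2) := by
  unfold ddJx
  push_cast
  have h0 : (0:ℝ) ≤ (n:ℝ) := n.cast_nonneg
  have h6 : (0:ℝ) < 2*((n:ℝ)+2)+a+b-2 := by linarith
  have h6' : (0:ℝ) < 2*((n:ℝ)+2)+a+b := by linarith
  have hbp : (b-a)*(a+b-2)/((2*((n:ℝ)+2)+a+b-2)*(2*((n:ℝ)+2)+a+b)) ≤ 1 := by
    rw [div_le_one (by positivity)]
    nlinarith
  have hden : (0:ℝ) < ((n:ℝ)+2)*(((n:ℝ)+2)+a+b-1) := by nlinarith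
  apply div_pos _ hden
  linarith

private lemma ddJx_le (a b η : ℝ) (ha : 0 < a) (hb : 0 < b) (hη : 1 < η) (n : ℕ) :
    ddJx a b η (n+2) ≤ (η+1)/((n:ℝ)+2) := by
  unfold ddJx
  push_cast
  have h0 : (0:ℝ) ≤ (n:ℝ) := n.cast_nonneg
  have h6 : (0:ℝ) < 2*((n:ℝ)+2)+a+b-2 := by linarith
  have h6' : (0:ℝ) < 2*((n:ℝ)+2)+a+b := by linarith
  have hbp : -1 ≤ (b-a)*(a+b-2)/((2*((n:ℝ)+2)+a+b-2)*(2*((n:ℝ)+2)+a+b)) := by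
    rw [le_div_iff₀ (by positivity)]
    nlinarith
  apply div_le_div₀ (by linarith) (by linarith) (by linarith)
  nlinarith
private lemma main_aux (α β ξ ε a b η : ℝ) (ha : 0 < a) (hb : 0 < b) (hη : 1 < η)
    (hC : ∀ n : ℕ, CcoJ α β n = CcoJ a b n)
    (hB : ∀ n : ℕ, BcoJ α β ξ ε (n+2) = -(ddJx a b η (n+2)))
    (hA1 : ApolyJ α β ξ ε 1 = Polynomial.X + Polynomial.C (-(negc1J a b η))) :
    (∀ n : ℕ, 1 ≤ n → ∃ μ : ℝ, IsLeast {x : ℝ | (ApolyJ α β ξ ε n).eval x = 0} μ) ∧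
    ∀ μ : ℕ → ℝ, (∀ n : ℕ, 1 ≤ n → IsLeast {x : ℝ | (ApolyJ α β ξ ε n).eval x = 0} (μ n)) →
      Tendsto μ atTop (nhds 0) := by
  obtain ⟨g, hg⟩ : ∃ g : ℕ → ℝ → ℝ,
      ∀ n x, g n x = (-1:ℝ)^n * Polynomial.eval x (ApolyJ α β ξ ε n) :=
    ⟨_, fun _ _ => rfl⟩
  have gcont : ∀ n, Continuous (g n) := by
    intro n
    have : g n = fun x => (-1:ℝ)^n * Polynomial.eval x (ApolyJ α β ξ ε n) := funext (hg n)
    rw [this]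
    exact continuous_const.mul (Polynomial.continuous _)
  have hrec : ∀ (n:ℕ) (x:ℝ), Polynomial.eval x (ApolyJ α β ξ ε (n+2)) =
      (x + BcoJ α β ξ ε (n+2)) * Polynomial.eval x (ApolyJ α β ξ ε (n+1))
      - CcoJ α β (n+2) * Polynomial.eval x (ApolyJ α β ξ ε n) := by
    intro n x
    rw [show ApolyJ α β ξ ε (n+2) =
      (Polynomial.X + Polynomial.C (BcoJ α β ξ ε (n + 2))) * ApolyJ α β ξ ε (n + 1) -
        Polynomial.C (CcoJ α β (n + 2)) * ApolyJ α β ξ ε n from rfl]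
    simp
  have hgrec : ∀ (n:ℕ) (x:ℝ),
      g (n+2) x = (ddJx a b η (n+2) - x) * g (n+1) x - CcoJ a b (n+2) * g n x := by
    intro n x
    rw [hg, hg, hg, hrec n x, hB n, hC (n+2)]
    ring
  have posP : ∀ (n:ℕ) (x:ℝ), x ≤ 0 → 0 < g n x ∧ tJx a b (n+1) * g n x ≤ g (n+1) x := by
    intro n
    induction n with
    | zero =>
      intro x hx
      have h1 : g 0 x = 1 := by rw [hg]; simp [ApolyJ]
      have h2 : g 1 x = negc1J a b η - x := by
        rw [hg, hA1]; simp; ring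
      constructor
      · rw [h1]; norm_num
      · rw [h1, h2, mul_one]
        have := baseJ a b η ha hb hη.le
        linarith
    | succ n ih =>
      intro x hx
      obtain ⟨ih1, ih2⟩ := ih x hx
      have T1pos := tJx_pos a b ha hb n
      have T2pos := tJx_pos a b ha hb (n+1)
      have X1pos : 0 < g (n+1) x := lt_of_lt_of_le (mul_pos T1pos ih1) ih2
      refine ⟨X1pos, ?_⟩
      have hch := chainJ a b η ha hb hη.le n
      have hCp := CcoJ_pos a b ha hb n
      have hdm : 0 < ddJx a b η (n+2) - tJx a b (n+2) := by
        by_contra hcon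
        push_neg at hcon
        nlinarith
      have hstep : CcoJ a b (n+2) * g n x
          ≤ (ddJx a b η (n+2) - tJx a b (n+2)) * g (n+1) x := by
        calc CcoJ a b (n+2) * g n x
            ≤ (tJx a b (n+1) * (ddJx a b η (n+2) - tJx a b (n+2))) * g n x :=
              mul_le_mul_of_nonneg_right hch ih1.le
          _ = (ddJx a b η (n+2) - tJx a b (n+2)) * (tJx a b (n+1) * g n x) := by ring
          _ ≤ (ddJx a b η (n+2) - tJx a b (n+2)) * g (n+1) x :=
              mul_le_mul_of_nonneg_left ih2 hdm.le
      show tJx a b (n+2) * g (n+1) x ≤ g (n+2) x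
      rw [hgrec n x]
      nlinarith [mul_nonneg (neg_nonneg.mpr hx) X1pos.le]
  have rootpos : ∀ (n:ℕ) (x:ℝ), Polynomial.eval x (ApolyJ α β ξ ε n) = 0 → 0 < x := by
    intro n x hx
    by_contra h
    push_neg at h
    have h2 := (posP n x h).1
    rw [hg, hx] at h2
    simp at h2
  have leastex : ∀ n : ℕ, (∃ z, Polynomial.eval z (ApolyJ α β ξ ε n) = 0) →
      ∃ r, IsLeast {x : ℝ | (ApolyJ α β ξ ε n).eval x = 0} r := by
    intro n hz
    have hne : (ApolyJ α β ξ ε n) ≠ 0 := by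
      intro h
      have h2 := (posP n 0 le_rfl).1
      rw [hg, h] at h2
      simp at h2
    have hfin : {x : ℝ | (ApolyJ α β ξ ε n).eval x = 0}.Finite := by
      apply Set.Finite.subset (ApolyJ α β ξ ε n).roots.toFinset.finite_toSet
      intro x hx
      exact Finset.mem_coe.mpr (Multiset.mem_toFinset.mpr ((Polynomial.mem_roots hne).mpr hx))
    obtain ⟨r, hrmem, hrmin⟩ := Set.exists_min_image _ id hfin hz
    exact ⟨r, hrmem, fun y hy => hrmin y hy⟩
  have geval0 : ∀ (n:ℕ) (z:ℝ), g n z = 0 → Polynomial.eval z (ApolyJ α β ξ ε n) = 0 := by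
    intro n z hz
    rw [hg] at hz
    rcases mul_eq_zero.mp hz with h'|h'
    · exact absurd h' (pow_ne_zero n (by norm_num))
    · exact h'
  have SC : ∀ (n:ℕ) (r x:ℝ), IsLeast {y : ℝ | (ApolyJ α β ξ ε n).eval y = 0} r →
      0 < x → x < r → 0 < g n x := by
    intro n r x hr hx0 hxr
    rcases lt_trichotomy (g n x) 0 with h|h|h
    · exfalso
      have hc : ContinuousOn (g n) (Set.Icc 0 x) := (gcont n).continuousOn
      have h0 : 0 < g n 0 := (posP n 0 le_rfl).1
      have hmem : (0:ℝ) ∈ Set.Ioo (g n x) (g n 0) := ⟨h, h0⟩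
      obtain ⟨z, hz, hz0⟩ := intermediate_value_Ioo' hx0.le hc hmem
      have hzz := geval0 n z hz0
      have hrz := hr.2 hzz
      have := hz.2
      linarith
    · exfalso
      have hzz := geval0 n x h
      have := hr.2 hzz
      linarith
    · exact h
  have stepcore : ∀ (n:ℕ) (r':ℝ), IsLeast {x : ℝ | (ApolyJ α β ξ ε (n+1)).eval x = 0} r' →
      0 < r' → 0 < g n r' →
      ∃ r'', IsLeast {x : ℝ | (ApolyJ α β ξ ε (n+2)).eval x = 0} r'' ∧ r'' < r' := by
    intro n r' hr' hr'pos hW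
    have hzero : g (n+1) r' = 0 := by
      rw [hg]
      have : Polynomial.eval r' (ApolyJ α β ξ ε (n+1)) = 0 := hr'.1
      rw [this, mul_zero]
    have hval : g (n+2) r' = -(CcoJ a b (n+2) * g n r') := by
      rw [hgrec n r', hzero]; ring
    have hneg : g (n+2) r' < 0 := by
      rw [hval]
      have := mul_pos (CcoJ_pos a b ha hb n) hW
      linarith
    have h0 : 0 < g (n+2) 0 := (posP (n+2) 0 le_rfl).1
    have hc : ContinuousOn (g (n+2)) (Set.Icc 0 r') := (gcont (n+2)).continuousOn
    have hmem : (0:ℝ) ∈ Set.Ioo (g (n+2) r') (g (n+2) 0) := ⟨hneg, h0⟩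
    obtain ⟨z, hz, hz0⟩ := intermediate_value_Ioo' hr'pos.le hc hmem
    have hzz := geval0 (n+2) z hz0
    obtain ⟨r'', hr''⟩ := leastex (n+2) ⟨z, hzz⟩
    exact ⟨r'', hr'', lt_of_le_of_lt (hr''.2 hzz) hz.2⟩
  have EXD : ∀ n : ℕ, 1 ≤ n → ∃ r r', IsLeast {x : ℝ | (ApolyJ α β ξ ε n).eval x = 0} r ∧
      IsLeast {x : ℝ | (ApolyJ α β ξ ε (n+1)).eval x = 0} r' ∧ r' < r := by
    intro n hn
    induction n, hn using Nat.le_induction with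
    | base =>
      have hS1 : IsLeast {x : ℝ | (ApolyJ α β ξ ε 1).eval x = 0} (negc1J a b η) := by
        constructor
        · show Polynomial.eval _ (ApolyJ α β ξ ε 1) = 0
          rw [hA1]; simp
        · intro y hy
          have hy' : Polynomial.eval y (ApolyJ α β ξ ε 1) = 0 := hy
          rw [hA1] at hy'
          simp at hy'
          linarith
      have hpos1 : 0 < negc1J a b η :=
        lt_of_lt_of_le (tJx_pos a b ha hb 0) (baseJ a b η ha hb hη.le)
      have hW : 0 < g 0 (negc1J a b η) := by rw [hg]; simp [ApolyJ]
      obtain ⟨r2, hr2, hlt⟩ := stepcore 0 _ hS1 hpos1 hW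
      exact ⟨_, r2, hS1, hr2, hlt⟩
    | succ n hn ih =>
      obtain ⟨r, r', hr, hr', hlt⟩ := ih
      have hr'pos : 0 < r' := rootpos (n+1) r' hr'.1
      have hW : 0 < g n r' := SC n r r' hr hr'pos hlt
      obtain ⟨r'', hr'', hlt'⟩ := stepcore n r' hr' hr'pos hW
      exact ⟨r', r'', hr', hr'', hlt'⟩
  constructor
  · intro n hn
    obtain ⟨r, _, hr, _, _⟩ := EXD n hn
    exact ⟨r, hr⟩
  · intro μ hμ
    have hdec : ∀ n, 1 ≤ n → μ (n+1) < μ n := by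
      intro n hn
      obtain ⟨r, r', hr, hr', hlt⟩ := EXD n hn
      rw [(hμ n hn).unique hr, (hμ (n+1) (by omega)).unique hr']
      exact hlt
    have hpos : ∀ n, 1 ≤ n → 0 < μ n := fun n hn => rootpos n _ (hμ n hn).1
    have hbound : ∀ n : ℕ, μ (n+2) ≤ ddJx a b η (n+2) := by
      intro n
      by_contra hcon
      push_neg at hcon
      have hdd := ddJx_pos a b η ha hb hη n
      obtain ⟨l, hldd, hllt⟩ : ∃ l, ddJx a b η (n+2) < l ∧ l < μ (n+2) :=
        ⟨(ddJx a b η (n+2) + μ (n+2))/2, by linarith, by linarith⟩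
      have hlpos : 0 < l := hdd.trans hldd
      have h21 : μ (n+2) < μ (n+1) := hdec (n+1) (by omega)
      have X1pos : 0 < g (n+1) l :=
        SC (n+1) (μ (n+1)) l (hμ (n+1) (by omega)) hlpos (by linarith)
      have X2pos : 0 < g (n+2) l :=
        SC (n+2) (μ (n+2)) l (hμ (n+2) (by omega)) hlpos hllt
      have Wpos : 0 < g n l := by
        rcases Nat.eq_zero_or_pos n with h0|h1
        · subst h0; rw [hg]; simp [ApolyJ]
        · have h10 : μ (n+1) < μ n := hdec n h1
          exact SC n (μ n) l (hμ n h1) hlpos (by linarith)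
      have hrec2 := hgrec n l
      have hterm1 : (ddJx a b η (n+2) - l) * g (n+1) l < 0 :=
        mul_neg_of_neg_of_pos (by linarith) X1pos
      have hterm2 : 0 < CcoJ a b (n+2) * g n l := mul_pos (CcoJ_pos a b ha hb n) Wpos
      linarith [hrec2, hterm1, hterm2, X2pos]
    have hup : ∀ᶠ n in atTop, μ n ≤ (η+1)/(n:ℝ) := by
      rw [eventually_atTop]
      refine ⟨2, fun n hn => ?_⟩
      obtain ⟨k, rfl⟩ : ∃ k, n = k + 2 := ⟨n - 2, by omega⟩
      calc μ (k+2) ≤ ddJx a b η (k+2) := hbound k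
        _ ≤ (η+1)/((k:ℝ)+2) := ddJx_le a b η ha hb hη k
        _ = (η+1)/(((k+2:ℕ)):ℝ) := by push_cast; ring
    have hlo : ∀ᶠ n in atTop, 0 ≤ μ n :=
      eventually_atTop.2 ⟨1, fun n hn => (hpos n hn).le⟩
    exact squeeze_zero' hlo hup (tendsto_const_div_atTop_nhds_zero_nat (η+1))
theorem stmt17 (α β ξ ε : ℝ) (hα : 0 < α) (hβ : 0 < β) (hξ : 1 < |ξ|)
    (hε : ε = if ξ < -1 then 1 else -1) :
    (∀ n : ℕ, 1 ≤ n → ∃ μ : ℝ, IsLeast {x : ℝ | (ApolyJ α β ξ ε n).eval x = 0} μ) ∧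
    ∀ μ : ℕ → ℝ, (∀ n : ℕ, 1 ≤ n → IsLeast {x : ℝ | (ApolyJ α β ξ ε n).eval x = 0} (μ n)) →
      Tendsto μ atTop (nhds 0) := by
  by_cases hneg : ξ < -1
  · rw [if_pos hneg] at hε
    subst hε
    have hη : 1 < -ξ := by linarith
    refine main_aux α β ξ 1 β α (-ξ) hβ hα hη ?_ ?_ ?_
    · intro n; unfold CcoJ; ring_nf
    · intro n
      unfold BcoJ ddJx
      push_cast
      ring
    · show Polynomial.X + Polynomial.C (1 * ((1 + α + β) * (2 + α + β) * ξ ^ 2 +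
          2 * (α - β) * (1 + α + β) * ξ + (α - β) ^ 2 - (2 + α + β)) /
        ((1 + α + β) * (2 + α + β) * (ξ * (α + β) - β + α)))
        = Polynomial.X + Polynomial.C (-(negc1J β α (-ξ)))
      refine congrArg (fun c : ℝ => Polynomial.X + Polynomial.C c) ?_
      unfold negc1J
      rw [← neg_div]
      have h3 : ξ*(α+β)-β+α < 0 := by nlinarith
      have hD : ((1+α+β)*(2+α+β)*(ξ*(α+β)-β+α)) ≠ 0 :=
        (mul_neg_of_pos_of_neg (mul_pos (by linarith) (by linarith)) h3).ne
      have h6 : (0:ℝ) < (-ξ)*(β+α)+β-α := by nlinarith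
      have hD' : ((1+(β+α))*(2+(β+α))*((-ξ)*(β+α)+β-α)) ≠ 0 :=
        (mul_pos (mul_pos (by linarith) (by linarith)) h6).ne'
      rw [div_eq_div_iff hD hD']
      ring
  · rw [if_neg hneg] at hε
    subst hε
    have hgt : 1 < ξ := by
      rcases lt_abs.mp hξ with h|h
      · exact h
      · linarith [not_lt.mp hneg]
    refine main_aux α β ξ (-1) α β ξ hα hβ hgt ?_ ?_ ?_
    · intro n; rfl
    · intro n
      unfold BcoJ ddJx
      push_cast
      ring
    · show Polynomial.X + Polynomial.C ((-1) * ((1 + α + β) * (2 + α + β) * ξ ^ 2 +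
          2 * (α - β) * (1 + α + β) * ξ + (α - β) ^ 2 - (2 + α + β)) /
        ((1 + α + β) * (2 + α + β) * (ξ * (α + β) - β + α)))
        = Polynomial.X + Polynomial.C (-(negc1J α β ξ))
      refine congrArg (fun c : ℝ => Polynomial.X + Polynomial.C c) ?_
      unfold negc1J
      rw [← neg_div]
      have h3 : (0:ℝ) < ξ*(α+β)-β+α := by nlinarith
      have hD : ((1+α+β)*(2+α+β)*(ξ*(α+β)-β+α)) ≠ 0 :=
        (mul_pos (mul_pos (by linarith) (by linarith)) h3).ne'
      have h6 : (0:ℝ) < ξ*(α+β)+α-β := by nlinarith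
      have hD' : ((1+(α+β))*(2+(α+β))*(ξ*(α+β)+α-β)) ≠ 0 :=
        (mul_pos (mul_pos (by linarith) (by linarith)) h6).ne'
      rw [div_eq_div_iff hD hD']
      ring
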